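/- arXiv:2301.12147 — 2 statements merged into one kernel-verified Lean document; each statement's English description precedes it below -/
import Mathlib

section
/- Let Ω ⊂ ℝ^N be a bounded domain with smooth boundary, β_Ω > 1 the smallest Dirichlet eigenvalue with positive eigenfunction φ_Ω, and let 1/β_Ω < τ < 1. Let ρ > 0 and c₃ > 0 be such that |∇φ_Ω|² ≥ c₃ on the tubular neighborhood Ω_ρ = {x ∈ Ω : dist(x, ∂Ω) < ρ}. Then for ε > 0 small enough that (ε + max_{Ω̄_ρ} φ_Ω)² ≤ τ(1−τ)c₃, the function ψ(x) = δ(φ_Ω(x) + ε)^τ satisfies Δψ + ψ − ψ^p ≤ 0 in Ω_ρ for every δ > 0 and every p > 1. -/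
open MeasureTheory Real Filter Topology Metric

noncomputable section

/-- `ℝ^N`. -/
abbrev Euc (N : ℕ) := EuclideanSpace ℝ (Fin N)

/-- The Laplacian `Δu = ∑ i ∂²u/∂xᵢ²`. -/
def lap {N : ℕ} (u : Euc N → ℝ) (x : Euc N) : ℝ :=
  ∑ i, fderiv ℝ (fun y => fderiv ℝ u y (EuclideanSpace.single i 1)) x (EuclideanSpace.single i 1)

lemma lap_comp {N : ℕ} (φ : Euc N → ℝ) (x : Euc N) (f f' : ℝ → ℝ) (b : ℝ)
    (hφ : ContDiffAt ℝ 2 φ x)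
    (hf : ∀ᶠ t in 𝓝 (φ x), HasDerivAt f (f' t) t)
    (hf' : HasDerivAt f' b (φ x)) :
    lap (fun y => f (φ y)) x
      = b * ‖gradient φ x‖ ^ 2 + f' (φ x) * lap φ x := by
  have hφd : ∀ᶠ y in 𝓝 x, DifferentiableAt ℝ φ y := by
    filter_upwards [hφ.eventually (by simp)] with y hy
    exact hy.differentiableAt two_ne_zero
  have hfy : ∀ᶠ y in 𝓝 x, HasDerivAt f (f' (φ y)) (φ y) :=
    (hφ.continuousAt.tendsto).eventually hf
  have key : ∀ v : Euc N, (fun y => fderiv ℝ (fun z => f (φ z)) y v)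
      =ᶠ[𝓝 x] (fun y => f' (φ y) * fderiv ℝ φ y v) := by
    intro v
    filter_upwards [hφd, hfy] with y hy hfy'
    have := (hfy'.comp_hasFDerivAt y hy.hasFDerivAt).fderiv
    rw [show (fun z => f (φ z)) = f ∘ φ from rfl, this]
    simp [mul_comm]
  -- differentiability ingredients
  have hf'd : DifferentiableAt ℝ (fun y => f' (φ y)) x :=
    (hf'.differentiableAt).comp x (hφ.differentiableAt two_ne_zero)
  have hDφ : ContDiffAt ℝ 1 (fderiv ℝ φ) x := hφ.fderiv_right (le_refl 2)
  have hsum : ∀ v : Euc N,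
      fderiv ℝ (fun y => fderiv ℝ (fun z => f (φ z)) y v) x v
        = b * (fderiv ℝ φ x v) * (fderiv ℝ φ x v)
          + f' (φ x) * fderiv ℝ (fun y => fderiv ℝ φ y v) x v := by
    intro v
    have h2d : DifferentiableAt ℝ (fun y => fderiv ℝ φ y v) x :=
      (hDφ.differentiableAt one_ne_zero).clm_apply (differentiableAt_const v)
    rw [Filter.EventuallyEq.fderiv_eq (key v)]
    rw [fderiv_fun_mul hf'd h2d]
    have hc : fderiv ℝ (fun y => f' (φ y)) x
        = (b : ℝ) • fderiv ℝ φ x :=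
      (hf'.comp_hasFDerivAt x (hφ.differentiableAt two_ne_zero).hasFDerivAt).fderiv
    simp [hc]
    ring
  have hgradv : ∀ v : Euc N, fderiv ℝ φ x v = inner ℝ (gradient φ x) v := by
    intro v
    rw [gradient]
    simp
  have hnorm : ‖gradient φ x‖ ^ 2
      = ∑ i : Fin N, (fderiv ℝ φ x (EuclideanSpace.single i 1))
          * (fderiv ℝ φ x (EuclideanSpace.single i 1)) := by
    have := EuclideanSpace.norm_eq (gradient φ x)
    rw [this, Real.sq_sqrt (by positivity)]
    congr 1; ext i
    rw [hgradv (EuclideanSpace.single i 1), EuclideanSpace.inner_single_right]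
    simp [sq, mul_assoc]
  unfold lap
  simp only [hsum]
  rw [Finset.sum_add_distrib, hnorm, Finset.mul_sum, Finset.mul_sum]
  simp [sq, mul_assoc]

/-- with `β_Ω > 1`, `1/β_Ω < τ < 1`, `|∇φΩ|² ≥ c₃` on the tubular
neighborhood `Ω_ρ = {x ∈ Ω : dist(x,∂Ω) < ρ}`, and `ε > 0` with
`(ε + max_{Ω̄_ρ} φΩ)² ≤ τ(1−τ)c₃`, the function `ψ = δ(φΩ + ε)^τ` satisfies
`Δψ + ψ − ψ^p ≤ 0` in `Ω_ρ` for every `δ > 0` and `p > 1`. -/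
theorem stmt14 {N : ℕ} (Ω : Set (Euc N)) (hΩo : IsOpen Ω) (hΩc : IsConnected Ω)
    (hΩb : Bornology.IsBounded Ω)
    (β τ ρ c₃ ε Mρ : ℝ) (hβ : 1 < β) (hτl : 1 / β < τ) (hτu : τ < 1)
    (hρ : 0 < ρ) (hc₃ : 0 < c₃) (hε : 0 < ε)
    (φΩ : Euc N → ℝ)
    -- φΩ is the positive first Dirichlet eigenfunction with eigenvalue β = β_Ω
    (hφpos : ∀ x ∈ Ω, 0 < φΩ x)
    (hφbdry : ∀ x ∈ frontier Ω, φΩ x = 0)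
    (hφeig : ∀ x ∈ Ω, -lap φΩ x = β * φΩ x)
    (hφreg : ContDiffOn ℝ 2 φΩ (closure Ω))
    -- |∇φΩ|² ≥ c₃ on the tubular neighborhood Ω_ρ
    (hgrad : ∀ x ∈ Ω, infDist x (frontier Ω) < ρ → c₃ ≤ ‖gradient φΩ x‖ ^ 2)
    -- Mρ bounds φΩ on the closure of Ω_ρ
    (hMρ : ∀ x ∈ closure {x | x ∈ Ω ∧ infDist x (frontier Ω) < ρ}, φΩ x ≤ Mρ)
    (hMρ0 : 0 ≤ Mρ)
    -- smallness of ε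
    (hsmall : (ε + Mρ) ^ 2 ≤ τ * (1 - τ) * c₃) :
    ∀ δ : ℝ, 0 < δ → ∀ p : ℝ, 1 < p → ∀ x ∈ Ω, infDist x (frontier Ω) < ρ →
      lap (fun y => δ * (φΩ y + ε) ^ τ) x + δ * (φΩ x + ε) ^ τ
        - (δ * (φΩ x + ε) ^ τ) ^ p ≤ 0 := by
  
  intro δ hδ p hp x hx hd
  have hφx : 0 < φΩ x := hφpos x hx
  have hs : 0 < φΩ x + ε := by linarith
  have hτ0 : 0 < τ := lt_trans (by positivity) hτl
  have hφat : ContDiffAt ℝ 2 φΩ x :=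
    hφreg.contDiffAt (Filter.mem_of_superset (hΩo.mem_nhds hx) subset_closure)
  set f : ℝ → ℝ := fun t => δ * (t + ε) ^ τ with hfdef
  set f' : ℝ → ℝ := fun t => δ * (τ * (t + ε) ^ (τ - 1)) with hf'def
  have hf : ∀ᶠ t in 𝓝 (φΩ x), HasDerivAt f (f' t) t := by
    filter_upwards [eventually_gt_nhds (show -ε < φΩ x by linarith)] with t ht
    have ht' : 0 < t + ε := by linarith
    have h1 : HasDerivAt (fun u : ℝ => u + ε) 1 t := (hasDerivAt_id t).add_const ε
    have h2 := (Real.hasDerivAt_rpow_const (x := t + ε) (p := τ) (Or.inl ht'.ne'))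
    have h3 := (h2.comp t h1).const_mul δ
    refine h3.congr_deriv ?_
    simp [hf'def]
  have hf' : HasDerivAt f' (δ * (τ * ((τ - 1) * (φΩ x + ε) ^ (τ - 2)))) (φΩ x) := by
    have h1 : HasDerivAt (fun u : ℝ => u + ε) 1 (φΩ x) := (hasDerivAt_id _).add_const ε
    have h2 := (Real.hasDerivAt_rpow_const (x := φΩ x + ε) (p := τ - 1) (Or.inl hs.ne'))
    have h3 := ((h2.comp (φΩ x) h1).const_mul τ).const_mul δ
    have he : τ - 1 - 1 = τ - 2 := by ring
    rw [he] at h3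
    refine h3.congr_deriv ?_
    ring
  have hlap := lap_comp φΩ x f f' (δ * (τ * ((τ - 1) * (φΩ x + ε) ^ (τ - 2)))) hφat hf hf'
  have hlapφ : lap φΩ x = -(β * φΩ x) := by have := hφeig x hx; linarith
  show lap (fun y => f (φΩ y)) x + δ * (φΩ x + ε) ^ τ - (δ * (φΩ x + ε) ^ τ) ^ p ≤ 0
  rw [hlap, hlapφ]
  set s := φΩ x + ε with hsdef
  set G := ‖gradient φΩ x‖ ^ 2 with hGdef
  have hG : c₃ ≤ G := hgrad x hx hd
  have hφM : φΩ x ≤ Mρ := hMρ x (subset_closure ⟨hx, hd⟩)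
  have hsle : s ≤ ε + Mρ := by rw [hsdef]; linarith
  have hA : (0:ℝ) < s ^ (τ - 2) := Real.rpow_pos_of_pos hs _
  have hB : (0:ℝ) < s ^ (τ - 1) := Real.rpow_pos_of_pos hs _
  have hCA : s ^ τ = s ^ (τ - 2) * s ^ 2 := by
    rw [← Real.rpow_natCast s 2, ← Real.rpow_add hs]; norm_num
  have h1 : 0 ≤ δ * τ * (1 - τ) * s ^ (τ - 2) * (G - c₃) := by
    have : (0:ℝ) ≤ δ * τ * (1 - τ) * s ^ (τ - 2) := by
      have : (0:ℝ) < 1 - τ := by linarith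
      positivity
    exact mul_nonneg this (by linarith)
  have h2 : 0 ≤ δ * s ^ (τ - 2) * ((ε + Mρ) ^ 2 - s ^ 2) := by
    apply mul_nonneg (by positivity)
    nlinarith
  have h3 : 0 ≤ δ * (τ * s ^ (τ - 1)) * (β * φΩ x) := by
    have hβ0 : (0:ℝ) < β := by linarith
    positivity
  have h4 : 0 ≤ δ * s ^ (τ - 2) * (τ * (1 - τ) * c₃ - (ε + Mρ) ^ 2) := by
    exact mul_nonneg (by positivity) (by linarith)
  have hf's : f' (φΩ x) = δ * (τ * s ^ (τ - 1)) := rfl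
  rw [hf's, hCA]
  have hP : (0:ℝ) ≤ (δ * (s ^ (τ - 2) * s ^ 2)) ^ p := Real.rpow_nonneg (by positivity) p
  nlinarith [h1, h2, h3, h4, hP]
end
end

section
/- Let Ω ⊂ ℝ^N be a bounded domain with smooth boundary, β_Ω > 1 its smallest Dirichlet eigenvalue with positive eigenfunction φ_Ω, 1/β_Ω < τ < 1, and ρ > 0 with c₄ > 0 such that φ_Ω ≥ c₄ on E_ρ = Ω \ Ω_ρ. If ε > 0 satisfies (1 − τβ_Ω)c₄ + ε ≤ 0, then ψ(x) = δ(φ_Ω(x) + ε)^τ satisfies Δψ + ψ − ψ^p ≤ 0 in E_ρ for every δ > 0 and p > 1. -/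
open MeasureTheory Real Filter Topology Metric

noncomputable section

set_option maxHeartbeats 1000000 in
/-- with `β_Ω > 1`, `1/β_Ω < τ < 1`, `φΩ ≥ c₄ > 0` on
`E_ρ = Ω \ Ω_ρ`, and `ε > 0` with `(1 − τβ_Ω)c₄ + ε ≤ 0`, the function
`ψ = δ(φΩ + ε)^τ` satisfies `Δψ + ψ − ψ^p ≤ 0` in `E_ρ` for every `δ > 0`
and `p > 1`. -/
theorem stmt15 {N : ℕ} (Ω : Set (Euc N)) (hΩo : IsOpen Ω) (hΩc : IsConnected Ω)
    (hΩb : Bornology.IsBounded Ω)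
    (β τ ρ c₄ ε : ℝ) (hβ : 1 < β) (hτl : 1 / β < τ) (hτu : τ < 1)
    (hρ : 0 < ρ) (hc₄ : 0 < c₄) (hε : 0 < ε)
    (φΩ : Euc N → ℝ)
    -- φΩ is the positive first Dirichlet eigenfunction with eigenvalue β = β_Ω
    (hφpos : ∀ x ∈ Ω, 0 < φΩ x)
    (hφbdry : ∀ x ∈ frontier Ω, φΩ x = 0)
    (hφeig : ∀ x ∈ Ω, -lap φΩ x = β * φΩ x)
    (hφreg : ContDiffOn ℝ 2 φΩ (closure Ω))
    -- φΩ ≥ c₄ on E_ρ = Ω \ Ω_ρ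
    (hlow : ∀ x ∈ Ω, ρ ≤ infDist x (frontier Ω) → c₄ ≤ φΩ x)
    -- smallness of ε
    (hsmall : (1 - τ * β) * c₄ + ε ≤ 0) :
    ∀ δ : ℝ, 0 < δ → ∀ p : ℝ, 1 < p → ∀ x ∈ Ω, ρ ≤ infDist x (frontier Ω) →
      lap (fun y => δ * (φΩ y + ε) ^ τ) x + δ * (φΩ x + ε) ^ τ
        - (δ * (φΩ x + ε) ^ τ) ^ p ≤ 0 := by
  intro δ hδ p hp x hxΩ hxρ
  have hβ0 : (0:ℝ) < β := lt_trans one_pos hβ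
  have hτ0 : (0:ℝ) < τ := lt_trans (by positivity) hτl
  have hτβ : 1 < τ * β := by
    rw [div_lt_iff₀ hβ0] at hτl; linarith
  have hφx : 0 < φΩ x := hφpos x hxΩ
  have hxc : c₄ ≤ φΩ x := hlow x hxΩ hxρ
  have hposΩ : ∀ y ∈ Ω, 0 < φΩ y + ε := fun y hy => add_pos (hφpos y hy) hε
  have hxpos : 0 < φΩ x + ε := hposΩ x hxΩ
  set g : ℝ → ℝ := fun t => δ * (t + ε) ^ τ with hgdef
  set g1 : ℝ → ℝ := fun t => δ * τ * (t + ε) ^ (τ - 1) with hg1def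
  set g2 : ℝ → ℝ := fun t => δ * τ * (τ - 1) * (t + ε) ^ (τ - 2) with hg2def
  have hdg : ∀ t : ℝ, 0 < t + ε → HasDerivAt g (g1 t) t := by
    intro t ht
    have h1 : HasDerivAt (fun s : ℝ => s + ε) 1 t := (hasDerivAt_id t).add_const ε
    have h2 := (h1.rpow_const (p := τ) (Or.inl (ne_of_gt ht))).const_mul δ
    simpa [hgdef, hg1def, mul_assoc, mul_comm, mul_left_comm] using h2
  have hdg1 : ∀ t : ℝ, 0 < t + ε → HasDerivAt g1 (g2 t) t := by
    intro t ht
    have h1 : HasDerivAt (fun s : ℝ => s + ε) 1 t := (hasDerivAt_id t).add_const ε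
    have h2 := (h1.rpow_const (p := τ - 1) (Or.inl (ne_of_gt ht))).const_mul (δ * τ)
    have : τ - 1 - 1 = τ - 2 := by ring
    simpa [hg1def, hg2def, this, mul_assoc, mul_comm, mul_left_comm] using h2
  -- smoothness of φ at points of Ω
  have hφC2 : ∀ y ∈ Ω, ContDiffAt ℝ 2 φΩ y := fun y hy =>
    hφreg.contDiffAt (mem_nhds_iff.mpr ⟨Ω, subset_closure, hΩo, hy⟩)
  have hφd : ∀ y ∈ Ω, HasFDerivAt φΩ (fderiv ℝ φΩ y) y := fun y hy =>
    ((hφC2 y hy).differentiableAt (by norm_num)).hasFDerivAt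
  -- first derivative of ψ on Ω
  have hψd : ∀ y ∈ Ω, HasFDerivAt (fun z => δ * (φΩ z + ε) ^ τ)
      (g1 (φΩ y) • fderiv ℝ φΩ y) y := by
    intro y hy
    exact (hdg (φΩ y) (hposΩ y hy)).comp_hasFDerivAt y (hφd y hy)
  -- second derivative objects at x
  set D := fderiv ℝ (fderiv ℝ φΩ) x with hDdef
  have hD : HasFDerivAt (fderiv ℝ φΩ) D x := by
    have h1 : ContDiffAt ℝ 1 (fderiv ℝ φΩ) x :=
      (hφC2 x hxΩ).fderiv_right (by norm_num)
    exact (h1.differentiableAt one_ne_zero).hasFDerivAt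
  have heval : ∀ v : Euc N, HasFDerivAt (fun y => fderiv ℝ φΩ y v)
      ((ContinuousLinearMap.apply ℝ ℝ v).comp D) x := fun v =>
    (ContinuousLinearMap.apply ℝ ℝ v).hasFDerivAt.comp x hD
  have hg1φ : HasFDerivAt (fun y => g1 (φΩ y)) (g2 (φΩ x) • fderiv ℝ φΩ x) x :=
    (hdg1 (φΩ x) hxpos).comp_hasFDerivAt x (hφd x hxΩ)
  -- compute lap of ψ
  have hΩnhds : Ω ∈ 𝓝 x := hΩo.mem_nhds hxΩ
  have hlapψ : ∀ v : Euc N,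
      fderiv ℝ (fun y => fderiv ℝ (fun z => δ * (φΩ z + ε) ^ τ) y v) x v
        = g2 (φΩ x) * (fderiv ℝ φΩ x v) ^ 2 + g1 (φΩ x) * (D v v) := by
    intro v
    have heq : (fun y => fderiv ℝ (fun z => δ * (φΩ z + ε) ^ τ) y v)
        =ᶠ[𝓝 x] fun y => g1 (φΩ y) * fderiv ℝ φΩ y v := by
      filter_upwards [hΩnhds] with y hy
      rw [(hψd y hy).fderiv]
      simp
    rw [heq.fderiv_eq]
    have hprod : HasFDerivAt (fun y => g1 (φΩ y) * fderiv ℝ φΩ y v) _ x := hg1φ.mul (heval v)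
    rw [hprod.fderiv]
    simp only [ContinuousLinearMap.add_apply, ContinuousLinearMap.smul_apply,
      ContinuousLinearMap.coe_comp', Function.comp_apply,
      ContinuousLinearMap.apply_apply, smul_eq_mul]
    ring
  have hlapφ : ∀ v : Euc N,
      fderiv ℝ (fun y => fderiv ℝ φΩ y v) x v = D v v := by
    intro v
    rw [(heval v).fderiv]
    simp
  have lap_eq : lap (fun y => δ * (φΩ y + ε) ^ τ) x
      = g2 (φΩ x) * (∑ i, (fderiv ℝ φΩ x (EuclideanSpace.single i 1)) ^ 2)
        + g1 (φΩ x) * lap φΩ x := by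
    unfold lap
    simp only [hlapψ, hlapφ]
    rw [Finset.sum_add_distrib, Finset.mul_sum, Finset.mul_sum]
  -- inequality
  have hlapφx : lap φΩ x = -(β * φΩ x) := by
    have := hφeig x hxΩ; linarith
  have hS : 0 ≤ ∑ i, (fderiv ℝ φΩ x (EuclideanSpace.single i 1)) ^ 2 :=
    Finset.sum_nonneg fun i _ => sq_nonneg _
  have hg2neg : g2 (φΩ x) ≤ 0 := by
    have : (0:ℝ) < (φΩ x + ε) ^ (τ - 2) := rpow_pos_of_pos hxpos _
    have h1 : δ * τ * (τ - 1) ≤ 0 := by nlinarith [mul_pos hδ hτ0]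
    simp only [hg2def]
    nlinarith
  have hterm1 : g2 (φΩ x) * (∑ i, (fderiv ℝ φΩ x (EuclideanSpace.single i 1)) ^ 2) ≤ 0 :=
    mul_nonpos_of_nonpos_of_nonneg hg2neg hS
  have hpow : (φΩ x + ε) ^ τ = (φΩ x + ε) ^ (τ - 1) * (φΩ x + ε) := by
    rw [show τ = (τ - 1) + 1 by ring, Real.rpow_add_one (ne_of_gt hxpos)]
    ring_nf
  have hrp : (0:ℝ) < (φΩ x + ε) ^ (τ - 1) := rpow_pos_of_pos hxpos _
  have hterm2 : g1 (φΩ x) * lap φΩ x + δ * (φΩ x + ε) ^ τ ≤ 0 := by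
    rw [hlapφx, hpow]
    simp only [hg1def]
    have hbracket : (1 - τ * β) * φΩ x + ε ≤ 0 := by nlinarith
    have : δ * τ * (φΩ x + ε) ^ (τ - 1) * -(β * φΩ x)
        + δ * ((φΩ x + ε) ^ (τ - 1) * (φΩ x + ε))
        = δ * (φΩ x + ε) ^ (τ - 1) * ((1 - τ * β) * φΩ x + ε) := by ring
    rw [this]
    have hpos : 0 < δ * (φΩ x + ε) ^ (τ - 1) := by positivity
    exact mul_nonpos_of_nonneg_of_nonpos (le_of_lt hpos) hbracket
  have hψp : 0 ≤ (δ * (φΩ x + ε) ^ τ) ^ p := by positivity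
  rw [lap_eq]
  linarith
end
end
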